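/- Mignotte's inequality: for any nonzero f ∈ ℂ[x], M(f) ≤ |f|_2, where |f|_2 is the l2-norm of the coefficient vector of f. -/

import Mathlib

open Polynomial

noncomputable def nsum (f : Polynomial ℂ) (M : ℕ) : ℝ :=
  ∑ i ∈ Finset.range M, Complex.normSq (f.coeff i)

lemma nsum_stable (f : Polynomial ℂ) {M : ℕ} (h : f.natDegree < M) :
    nsum f M = nsum f (f.natDegree + 1) := by
  refine (Finset.sum_subset (Finset.range_subset_range.mpr (by omega)) ?_).symm
  intro i _ hi
  have : f.natDegree < i := by simpa using hi
  simp [coeff_eq_zero_of_natDegree_lt this]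

lemma key (α u v : ℂ) :
    Complex.normSq (u - α * v) - Complex.normSq ((starRingEnd ℂ) α * u - v)
      = (1 - Complex.normSq α) * (Complex.normSq u - Complex.normSq v) := by
  simp [Complex.normSq_apply, Complex.sub_re, Complex.sub_im, Complex.mul_re, Complex.mul_im]
  ring

lemma nsum_X_mul (h : Polynomial ℂ) {M : ℕ} (hM : h.natDegree + 2 ≤ M) :
    nsum (X * h) M = nsum h M := by
  obtain ⟨m, rfl⟩ : ∃ m, M = m + 1 := ⟨M - 1, by omega⟩
  have hm : h.natDegree < m := by omega
  unfold nsum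
  rw [Finset.sum_range_succ']
  simp only [coeff_X_mul, mul_coeff_zero, coeff_X_zero, zero_mul, map_zero, add_zero]
  rw [Finset.sum_range_succ]
  simp [coeff_eq_zero_of_natDegree_lt hm]

lemma swap_lemma (α : ℂ) (h : Polynomial ℂ) {M : ℕ} (hM : h.natDegree + 2 ≤ M) :
    nsum ((X - C α) * h) M = nsum ((C ((starRingEnd ℂ) α) * X - 1) * h) M := by
  have hp : ∀ i, ((X - C α) * h).coeff i = (X * h).coeff i - α * h.coeff i := by
    intro i; rw [sub_mul, coeff_sub, coeff_C_mul]
  have hq : ∀ i, ((C ((starRingEnd ℂ) α) * X - 1) * h).coeff i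
      = (starRingEnd ℂ) α * (X * h).coeff i - h.coeff i := by
    intro i; rw [sub_mul, coeff_sub, one_mul, mul_assoc, coeff_C_mul]
  have hsum : nsum ((X - C α) * h) M - nsum ((C ((starRingEnd ℂ) α) * X - 1) * h) M
      = (1 - Complex.normSq α) * (nsum (X * h) M - nsum h M) := by
    unfold nsum
    rw [← Finset.sum_sub_distrib, ← Finset.sum_sub_distrib, Finset.mul_sum]
    refine Finset.sum_congr rfl fun i _ => ?_
    rw [hp, hq, key]
  rw [nsum_X_mul h hM, sub_self, mul_zero] at hsum
  linarith

noncomputable def mflip (α : ℂ) : Polynomial ℂ :=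
  if 1 < ‖α‖ then C ((starRingEnd ℂ) α) * X - 1 else X - C α

lemma natDegree_flip_le (α : ℂ) : (mflip α).natDegree ≤ 1 := by
  unfold mflip
  split
  · refine (natDegree_sub_le _ _).trans (max_le ?_ ?_)
    · exact (natDegree_C_mul_le _ _).trans (by simp)
    · simp
  · simp [natDegree_X_sub_C]

lemma abs_leadingCoeff_flip (α : ℂ) :
    ‖(mflip α).leadingCoeff‖ = max 1 ‖α‖ := by
  unfold mflip
  split
  · rename_i hα
    have hα0 : α ≠ 0 := by intro h; rw [h] at hα; norm_num at hα
    have hne : (starRingEnd ℂ) α ≠ 0 := by simpa using hα0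
    have : C ((starRingEnd ℂ) α) * X - 1 = C ((starRingEnd ℂ) α) * X + C (-1) := by
      simp [sub_eq_add_neg]
    rw [this, leadingCoeff_linear hne]
    simp [max_eq_right (le_of_lt hα)]
  · rename_i hα
    rw [leadingCoeff_X_sub_C]
    simp [max_eq_left (not_lt.mp hα)]

noncomputable def L2sq (f : Polynomial ℂ) : ℝ := nsum f (f.natDegree + 1)

lemma L2sq_eq_nsum (f : Polynomial ℂ) {M : ℕ} (h : f.natDegree < M) :
    L2sq f = nsum f M := (nsum_stable f h).symm

lemma main_ind (s : Multiset ℂ) :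
    ∀ h : Polynomial ℂ,
      L2sq (h * (s.map mflip).prod) = L2sq (h * (s.map (fun α => X - C α)).prod) := by
  induction s using Multiset.induction with
  | empty => simp
  | cons α t IH =>
    intro h
    rw [Multiset.map_cons, Multiset.prod_cons, Multiset.map_cons, Multiset.prod_cons]
    have e1 : h * (mflip α * (t.map mflip).prod) = (h * mflip α) * (t.map mflip).prod := by ring
    have e2 : (h * mflip α) * (t.map (fun α => X - C α)).prod
        = mflip α * (h * (t.map (fun α => X - C α)).prod) := by ring
    rw [e1, IH (h * mflip α), e2]
    set g := h * (t.map (fun α => X - C α)).prod with hg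
    have e3 : h * ((X - C α) * (t.map (fun α => X - C α)).prod) = (X - C α) * g := by
      rw [hg]; ring
    rw [e3]
    unfold mflip
    split
    · have hd1 : ((C ((starRingEnd ℂ) α) * X - 1) * g).natDegree < g.natDegree + 2 := by
        have := natDegree_mul_le (p := C ((starRingEnd ℂ) α) * X - 1) (q := g)
        have h1 : (C ((starRingEnd ℂ) α) * X - 1).natDegree ≤ 1 := by
          refine (natDegree_sub_le _ _).trans (max_le ?_ ?_)
          · exact (natDegree_C_mul_le _ _).trans (by simp)
          · simp
        omega
      have hd2 : ((X - C α) * g).natDegree < g.natDegree + 2 := by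
        have := natDegree_mul_le (p := X - C α) (q := g)
        have h1 : (X - C α).natDegree ≤ 1 := (natDegree_X_sub_C α).le
        omega
      rw [L2sq_eq_nsum _ hd1, L2sq_eq_nsum _ hd2]
      exact (swap_lemma α g (by omega)).symm
    · rfl

/-- Mahler measure `M(f) = |lc(f)| · Π max(1,|α|)` over the complex roots of `f`. -/
noncomputable def mahlerMeasure (f : Polynomial ℂ) : ℝ :=
  ‖f.leadingCoeff‖ * ((f.roots).map (fun a => max 1 ‖a‖)).prod

/-- The `l2`-norm of the coefficient vector of `f`. -/
noncomputable def l2Norm (f : Polynomial ℂ) : ℝ :=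
  Real.sqrt (∑ i ∈ Finset.range (f.natDegree + 1), ‖f.coeff i‖ ^ 2)

/-- Mignotte's inequality: `M(f) ≤ |f|₂` for nonzero `f ∈ ℂ[x]`. -/
theorem mahlerMeasure_le_l2Norm (f : Polynomial ℂ) (hf : f ≠ 0) :
    _root_.mahlerMeasure f ≤ l2Norm f := by
  have hcard : f.roots.card = f.natDegree :=
    (splits_iff_card_roots).mp (IsAlgClosed.splits f)
  have hfactor : C f.leadingCoeff * (f.roots.map fun a => X - C a).prod = f :=
    C_leadingCoeff_mul_prod_multiset_X_sub_C hcard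
  set g := C f.leadingCoeff * (f.roots.map mflip).prod with hg
  have hL : L2sq g = L2sq f := by
    rw [hg, main_ind f.roots (C f.leadingCoeff), hfactor]
  have hMM : _root_.mahlerMeasure f = ‖g.leadingCoeff‖ := by
    have hn : ∀ s : Multiset ℂ, ‖s.prod‖ = (s.map (fun x => ‖x‖)).prod :=
      fun s => map_multiset_prod (normHom (α := ℂ)) s
    rw [hg, leadingCoeff_mul, leadingCoeff_C, leadingCoeff_multiset_prod, Multiset.map_map,
      norm_mul, hn, Multiset.map_map]
    unfold _root_.mahlerMeasure
    congr 2
    exact (Multiset.map_congr rfl fun a _ => (abs_leadingCoeff_flip a)).symm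
  have hterm : Complex.normSq g.leadingCoeff ≤ L2sq g := by
    unfold L2sq nsum
    have := Finset.single_le_sum (f := fun i => Complex.normSq (g.coeff i))
      (fun i _ => Complex.normSq_nonneg _) (Finset.self_mem_range_succ g.natDegree)
    rw [leadingCoeff]
    exact this
  have hL2 : Real.sqrt (L2sq f) = l2Norm f := by
    unfold l2Norm L2sq nsum
    congr 1
    exact Finset.sum_congr rfl fun i _ => (Complex.sq_norm _).symm
  calc _root_.mahlerMeasure f = Real.sqrt (Complex.normSq g.leadingCoeff) := by
        rw [hMM, Complex.norm_def]
    _ ≤ Real.sqrt (L2sq g) := Real.sqrt_le_sqrt hterm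
    _ = l2Norm f := by rw [hL, hL2]
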